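/- arXiv:2311.02273 — 2 statements merged into one kernel-verified Lean document; each statement's English description precedes it below -/
import Mathlib

section
/- The sequential learning procedure 𝒫(ρ,k) terminates with probability one: P(N_{𝒫(ρ,k)} < ∞) = 1. Equivalently, the stopping time t = inf{n ≥ m₀ : kn(kn − p) ≥ ρ n* Σ_{i=1}^{n} U_i}, where U_1, U_2, … are i.i.d. χ²_k random variables, is almost surely finite. -/
open MeasureTheory ProbabilityTheory Filter Matrix NNReal

noncomputable section

namespace SeqLearn

variable {Ω : Type*} [MeasurableSpace Ω]

/-- The design matrix `𝕏_n` built from the infinite sequence of design rows `X`. -/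
def designMat (p : ℕ) (X : ℕ → Fin p → ℝ) (n : ℕ) : Matrix (Fin n) (Fin p) ℝ :=
  Matrix.of fun i j => X (i : ℕ) j

/-- The response vector `Y_n = 𝕏_n β + ε_n`. -/
def Yvec (p : ℕ) (X : ℕ → Fin p → ℝ) (β : Fin p → ℝ) (ε : ℕ → Ω → ℝ)
    (n : ℕ) (ω : Ω) : Fin n → ℝ :=
  fun i => (∑ j, X (i : ℕ) j * β j) + ε (i : ℕ) ω

/-- The least squares estimator `β̂_n = (𝕏_n′𝕏_n)⁻¹ 𝕏_n′ Y_n`. -/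
def lse (p : ℕ) (X : ℕ → Fin p → ℝ) (β : Fin p → ℝ) (ε : ℕ → Ω → ℝ)
    (n : ℕ) (ω : Ω) : Fin p → ℝ :=
  ((designMat p X n)ᵀ * designMat p X n)⁻¹ *ᵥ
    ((designMat p X n)ᵀ *ᵥ Yvec p X β ε n ω)

/-- The residual variance estimator
`S_n² = (n - p)⁻¹ (Y_n - 𝕏_n β̂_n)′(Y_n - 𝕏_n β̂_n)`. -/
def S2 (p : ℕ) (X : ℕ → Fin p → ℝ) (β : Fin p → ℝ) (ε : ℕ → Ω → ℝ)
    (n : ℕ) (ω : Ω) : ℝ :=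
  ((n : ℝ) - (p : ℝ))⁻¹ *
    ∑ i, (Yvec p X β ε n ω i - (designMat p X n *ᵥ lse p X β ε n ω) i) ^ 2

/-- The loss `L(β, β̂_n) = n⁻¹ (β̂_n - β)′ (𝕏_n′𝕏_n) (β̂_n - β)`. -/
def loss (p : ℕ) (X : ℕ → Fin p → ℝ) (β : Fin p → ℝ) (ε : ℕ → Ω → ℝ)
    (n : ℕ) (ω : Ω) : ℝ :=
  (n : ℝ)⁻¹ *
    ((lse p X β ε n ω - β) ⬝ᵥ
      (((designMat p X n)ᵀ * designMat p X n) *ᵥ (lse p X β ε n ω - β)))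

/-- The Gauss–Markov setup with independent normal errors: the errors `ε_i` are
i.i.d. `N(0, σ²)` random variables. -/
def GaussErrors (μ : Measure Ω) (σ2 : ℝ≥0) (ε : ℕ → Ω → ℝ) : Prop :=
  (∀ i, Measurable (ε i)) ∧
    iIndepFun ε μ ∧
    ∀ i, μ.map (ε i) = gaussianReal 0 σ2

/-- The stopping criterion of the procedure `𝒫(ρ,k)`:
`m + kn ≥ ρ b⁻¹ p S²_{m+kn}` is satisfied at stage `n`. -/
def stopRule (p : ℕ) (X : ℕ → Fin p → ℝ) (β : Fin p → ℝ) (ε : ℕ → Ω → ℝ)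
    (ρ b : ℝ) (m k : ℕ) (ω : Ω) (n : ℕ) : Prop :=
  ρ * b⁻¹ * (p : ℝ) * S2 p X β ε (m + k * n) ω ≤ ((m + k * n : ℕ) : ℝ)

/-- The stopping time `T_{𝒫(ρ,k)} = inf {n ≥ 0 : m + kn ≥ ρ b⁻¹ p S²_{m+kn}}`. -/
def Tstop (p : ℕ) (X : ℕ → Fin p → ℝ) (β : Fin p → ℝ) (ε : ℕ → Ω → ℝ)
    (ρ b : ℝ) (m k : ℕ) (ω : Ω) : ℕ :=
  sInf {n : ℕ | stopRule p X β ε ρ b m k ω n}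

/-- `N*_{𝒫(ρ,k)} = ρ⁻¹ (m + k T_{𝒫(ρ,k)})`. -/
def Nstar (p : ℕ) (X : ℕ → Fin p → ℝ) (β : Fin p → ℝ) (ε : ℕ → Ω → ℝ)
    (ρ b : ℝ) (m k : ℕ) (ω : Ω) : ℝ :=
  ρ⁻¹ * ((m : ℝ) + (k : ℝ) * (Tstop p X β ε ρ b m k ω : ℝ))

/-- The final sample size `N_{𝒫(ρ,k)} = ⌊N*⌋ + 1`, where `⌊u⌋` is the largest
integer strictly smaller than `u`; for `N* > 0` this is exactly `⌈N*⌉`. -/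
def Nfin (p : ℕ) (X : ℕ → Fin p → ℝ) (β : Fin p → ℝ) (ε : ℕ → Ω → ℝ)
    (ρ b : ℝ) (m k : ℕ) (ω : Ω) : ℕ :=
  ⌈Nstar p X β ε ρ b m k ω⌉₊

/-! ### Auxiliary lemmas -/

open Real in
lemma aux_isUnit_det_of_rank_eq {q : ℕ} (M : Matrix (Fin q) (Fin q) ℝ) (h : M.rank = q) :
    IsUnit M.det := by
  rw [isUnit_iff_ne_zero]
  intro hdet
  obtain ⟨v, hv, hMv⟩ := (Matrix.exists_mulVec_eq_zero_iff).mpr hdet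
  have hker : v ∈ LinearMap.ker M.mulVecLin := by
    simpa [Matrix.mulVecLin_apply] using hMv
  have h1 : 0 < Module.finrank ℝ (LinearMap.ker M.mulVecLin) := by
    rw [Module.finrank_pos_iff]
    exact ⟨⟨⟨v, hker⟩, 0, by simpa using hv⟩⟩
  have h2 := LinearMap.finrank_range_add_finrank_ker M.mulVecLin
  rw [Module.finrank_fin_fun] at h2
  have h3 : Module.finrank ℝ (LinearMap.range M.mulVecLin) = q := h
  omega

lemma aux_sum_sq_resid_le {Ω : Type*} [MeasurableSpace Ω]
    (p N : ℕ) (X : ℕ → Fin p → ℝ) (β : Fin p → ℝ) (ε : ℕ → Ω → ℝ) (ω : Ω)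
    (hdet : IsUnit ((designMat p X N)ᵀ * designMat p X N).det) :
    ∑ i, (Yvec p X β ε N ω i - (designMat p X N *ᵥ lse p X β ε N ω) i) ^ 2
      ≤ ∑ i : Fin N, ε (i : ℕ) ω ^ 2 := by
  set A := designMat p X N with hA
  set Y := Yvec p X β ε N ω with hYdef
  set bh := lse p X β ε N ω with hbh
  set e : Fin N → ℝ := fun i => ε (i : ℕ) ω with he
  have hY : Y = A *ᵥ β + e := by
    funext i
    simp [hYdef, Yvec, hA, designMat, Matrix.mulVec, dotProduct, he]
  set r : Fin N → ℝ := Y - A *ᵥ bh with hr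
  have hXr : Aᵀ *ᵥ r = 0 := by
    rw [hr, Matrix.mulVec_sub, Matrix.mulVec_mulVec, hbh, lse, ← hA,
      Matrix.mulVec_mulVec, Matrix.mul_nonsing_inv _ hdet,
      Matrix.one_mulVec, ← hYdef, sub_self]
  set w : Fin N → ℝ := A *ᵥ (bh - β) with hw
  have hkey : e = r + w := by
    rw [hr, hw, Matrix.mulVec_sub]
    funext i
    simp [hY]
  have hdot : r ⬝ᵥ w = 0 := by
    rw [hw, Matrix.dotProduct_mulVec]
    rw [← Matrix.mulVec_transpose, hXr, zero_dotProduct]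
  have hsum : ∑ i : Fin N, e i ^ 2
      = ∑ i : Fin N, r i ^ 2 + 2 * (r ⬝ᵥ w) + ∑ i : Fin N, w i ^ 2 := by
    rw [dotProduct, Finset.mul_sum, ← Finset.sum_add_distrib, ← Finset.sum_add_distrib]
    refine Finset.sum_congr rfl fun i _ => ?_
    rw [hkey]
    simp only [Pi.add_apply]
    ring
  have hresid : ∀ i, Yvec p X β ε N ω i - (designMat p X N *ᵥ lse p X β ε N ω) i = r i := by
    intro i; simp [hr, ← hA, ← hYdef, ← hbh]
  calc ∑ i, (Yvec p X β ε N ω i - (designMat p X N *ᵥ lse p X β ε N ω) i) ^ 2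
      = ∑ i : Fin N, r i ^ 2 := by simp_rw [hresid]
    _ ≤ ∑ i : Fin N, r i ^ 2 + 2 * (r ⬝ᵥ w) + ∑ i : Fin N, w i ^ 2 := by
        rw [hdot]
        have : (0:ℝ) ≤ ∑ i : Fin N, w i ^ 2 := Finset.sum_nonneg fun i _ => sq_nonneg _
        linarith
    _ = ∑ i : Fin N, e i ^ 2 := hsum.symm

open Real in
lemma aux_integrable_sq_gaussian (σ2 : ℝ≥0) (hσ2 : σ2 ≠ 0) :
    Integrable (fun x : ℝ => x ^ 2) (gaussianReal 0 σ2) := by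
  rw [gaussianReal_of_var_ne_zero 0 hσ2]
  unfold gaussianPDF
  rw [integrable_withDensity_iff (measurable_gaussianPDFReal 0 σ2).ennreal_ofReal
    (Filter.Eventually.of_forall fun x => ENNReal.ofReal_lt_top)]
  have hb : (0:ℝ) < 1 / (2 * (σ2:ℝ)) := by
    have : (0:ℝ) < (σ2:ℝ) := by exact_mod_cast pos_iff_ne_zero.mpr hσ2
    positivity
  have h1 : Integrable (fun x : ℝ => x ^ (2:ℝ) * rexp (-(1/(2*(σ2:ℝ))) * x ^ 2)) :=
    integrable_rpow_mul_exp_neg_mul_sq hb (by norm_num)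
  simp_rw [Real.rpow_two] at h1
  have h2 := h1.const_mul ((Real.sqrt (2 * Real.pi * σ2))⁻¹)
  apply h2.congr
  filter_upwards with x
  rw [ENNReal.toReal_ofReal (gaussianPDFReal_nonneg 0 σ2 x)]
  rw [gaussianPDFReal]
  have harg : -(x - 0) ^ 2 / (2 * (σ2:ℝ)) = -(1/(2*(σ2:ℝ))) * x ^ 2 := by
    rw [sub_zero]; ring
  rw [harg]; ring

open Real in
lemma aux_integrable_id_gamma {a r : ℝ} (ha : 0 < a) (hr : 0 < r) :
    Integrable id (gammaMeasure a r) := by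
  rw [gammaMeasure]
  unfold gammaPDF
  rw [integrable_withDensity_iff (measurable_gammaPDFReal a r).ennreal_ofReal
    (Filter.Eventually.of_forall fun x => ENNReal.ofReal_lt_top)]
  simp_rw [id_eq]
  have heq : (fun x : ℝ => x * (ENNReal.ofReal (gammaPDFReal a r x)).toReal)
      = Set.indicator (Set.Ioi (0:ℝ))
        (fun x => (r ^ a / Real.Gamma a) * (x ^ a * rexp (-(r * x)))) := by
    funext x
    rw [ENNReal.toReal_ofReal (gammaPDFReal_nonneg ha hr x)]
    rcases lt_trichotomy x 0 with hx | hx | hx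
    · rw [Set.indicator_of_notMem (by simpa using hx.le.not_gt : x ∉ Set.Ioi (0:ℝ))]
      rw [gammaPDFReal, if_neg (not_le.mpr hx), mul_zero]
    · subst hx
      simp
    · rw [Set.indicator_of_mem (Set.mem_Ioi.mpr hx)]
      rw [gammaPDFReal, if_pos hx.le]
      rw [show x ^ a = x ^ (1:ℝ) * x ^ (a - 1) by
        rw [← Real.rpow_add hx]; norm_num]
      rw [Real.rpow_one]
      ring
  rw [heq, integrable_indicator_iff measurableSet_Ioi]
  have h0 : IntegrableOn (fun x : ℝ => x ^ a * rexp (-r * x ^ (1:ℝ))) (Set.Ioi 0) :=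
    integrableOn_rpow_mul_exp_neg_mul_rpow (by linarith) (by norm_num) hr
  simp_rw [Real.rpow_one, neg_mul] at h0
  exact (h0.const_mul _)

/-- From the strong law, partial sums are eventually dominated by a linear function. -/
lemma aux_sum_eventually_le {Ω : Type*} [MeasurableSpace Ω] {μ : Measure Ω}
    [IsProbabilityMeasure μ]
    (V : ℕ → Ω → ℝ) (hint : Integrable (V 0) μ)
    (hindep : Pairwise (Function.onFun (IndepFun · · μ) V))
    (hident : ∀ i, IdentDistrib (V i) (V 0) μ μ) :
    ∃ C : ℝ, 0 < C ∧ ∀ᵐ ω ∂μ, ∃ N₁ : ℕ, ∀ n ≥ N₁,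
      ∑ i ∈ Finset.range n, V i ω ≤ C * n := by
  set c := μ[V 0] with hc
  refine ⟨|c| + 1, by positivity, ?_⟩
  filter_upwards [ProbabilityTheory.strong_law_ae_real V hint hindep hident] with ω hω
  have h1 : ∀ᶠ n : ℕ in Filter.atTop,
      (∑ i ∈ Finset.range n, V i ω) / n < c + 1 :=
    hω.eventually_lt_const (lt_add_one c)
  have h2 : ∀ᶠ n : ℕ in Filter.atTop,
      ∑ i ∈ Finset.range n, V i ω ≤ (|c| + 1) * n := by
    filter_upwards [h1, Filter.eventually_ge_atTop 1] with n hn hn1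
    have hnpos : (0:ℝ) < n := by exact_mod_cast hn1
    have := (div_lt_iff₀ hnpos).mp hn
    have hca : c + 1 ≤ |c| + 1 := by linarith [le_abs_self c]
    nlinarith
  exact Filter.eventually_atTop.mp h2

/-- The sequential learning procedure `𝒫(ρ,k)` terminates with
probability one: `P(N_{𝒫(ρ,k)} < ∞) = 1`, i.e. the stopping set
`{n ≥ 0 : m + kn ≥ ρ b⁻¹ p S²_{m+kn}}` is almost surely nonempty.  Equivalently,
the stopping time `t = inf {n ≥ m₀ : kn(kn − p) ≥ ρ n* Σ_{i=1}^n U_i}`, where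
`U_1, U_2, …` are i.i.d. `χ²_k` random variables, is almost surely finite. -/
theorem procedure_terminates_wp1 (μ : Measure Ω) [IsProbabilityMeasure μ]
    (p : ℕ) (hp : 1 ≤ p) (σ2 : ℝ≥0) (hσ2 : 0 < σ2)
    (X : ℕ → Fin p → ℝ) (β : Fin p → ℝ) (ε : ℕ → Ω → ℝ)
    (herr : GaussErrors μ σ2 ε)
    (ρ : ℝ) (hρ : 0 < ρ ∧ ρ ≤ 1) (k : ℕ) (hk : 1 ≤ k)
    (m₀ : ℕ) (hm₀ : 1 ≤ m₀) (m : ℕ) (hm : m = m₀ * k + p)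
    (b : ℝ) (hb : 0 < b)
    (hrank : ∀ j, p + 1 ≤ j → (designMat p X j).rank = p)
    -- the i.i.d. `χ²_k` variables of the equivalent formulation
    (U : ℕ → Ω → ℝ) (hUmeas : ∀ i, Measurable (U i))
    (hUindep : iIndepFun U μ)
    (hUlaw : ∀ i, μ.map (U i) = gammaMeasure ((k : ℝ) / 2) (1 / 2)) :
    μ {ω | {n : ℕ | stopRule p X β ε ρ b m k ω n}.Nonempty} = 1 ∧
    (∀ᵐ ω ∂μ,
      {n : ℕ | m₀ ≤ n ∧
        ρ * ((p : ℝ) * (σ2 : ℝ) / b) * ∑ i ∈ Finset.range n, U i ω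
          ≤ ((k * n : ℕ) : ℝ) * (((k * n : ℕ) : ℝ) - (p : ℝ))}.Nonempty) := by
  obtain ⟨hρ0, hρ1⟩ := hρ
  obtain ⟨hεmeas, hεindep, hεlaw⟩ := herr
  have hkR : (1:ℝ) ≤ (k:ℝ) := by exact_mod_cast hk
  -- Part 1
  set Z : ℕ → Ω → ℝ := fun i ω => ε i ω ^ 2 with hZ
  have hZint : Integrable (Z 0) μ := by
    have h := aux_integrable_sq_gaussian σ2 hσ2.ne'
    rw [← hεlaw 0] at h
    exact (integrable_map_measure h.aestronglyMeasurable
      (hεmeas 0).aemeasurable).mp h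
  have hZindep : Pairwise (Function.onFun (IndepFun · · μ) Z) := fun i j hij =>
    (hεindep.indepFun hij).comp (measurable_id.pow_const 2) (measurable_id.pow_const 2)
  have hident_e : ∀ i, IdentDistrib (ε i) (ε 0) μ μ := fun i =>
    ⟨(hεmeas i).aemeasurable, (hεmeas 0).aemeasurable, by rw [hεlaw i, hεlaw 0]⟩
  have hZident : ∀ i, IdentDistrib (Z i) (Z 0) μ μ := fun i =>
    (hident_e i).comp (measurable_id.pow_const 2)
  obtain ⟨C, hC, haeZ⟩ := aux_sum_eventually_le Z hZint hZindep hZident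
  have hae1 : ∀ᵐ ω ∂μ, {n : ℕ | stopRule p X β ε ρ b m k ω n}.Nonempty := by
    filter_upwards [haeZ] with ω hω
    obtain ⟨N₁, hN₁⟩ := hω
    set D := ρ * b⁻¹ * (p:ℝ) * C with hD
    have hD0 : 0 ≤ D :=
      mul_nonneg (mul_nonneg (mul_nonneg hρ0.le (inv_nonneg.mpr hb.le))
        (Nat.cast_nonneg p)) hC.le
    set n := N₁ + p + ⌈D⌉₊ + 1 with hn
    refine ⟨n, ?_⟩
    set N := m + k * n with hNdef
    have hkn : n ≤ k * n := Nat.le_mul_of_pos_left n (by omega)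
    have hnN : n ≤ N := le_trans hkn (Nat.le_add_left _ _)
    have hm1 : 1 ≤ m₀ * k := Nat.one_le_iff_ne_zero.mpr (by positivity)
    have hpN : p + 1 ≤ N := by omega
    have hdet : IsUnit ((designMat p X N)ᵀ * designMat p X N).det := by
      apply aux_isUnit_det_of_rank_eq
      rw [Matrix.rank_transpose_mul_self]
      exact hrank N hpN
    have hres := aux_sum_sq_resid_le p N X β ε ω hdet
    have hsum : ∑ i : Fin N, ε (i:ℕ) ω ^ 2 ≤ C * N := by
      have h2 := hN₁ N (le_trans (by omega) hnN)
      have h3 : ∑ i : Fin N, ε (i:ℕ) ω ^ 2 = ∑ i ∈ Finset.range N, Z i ω :=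
        Fin.sum_univ_eq_sum_range (fun i => Z i ω) N
      rw [h3]; exact h2
    have ht : (0:ℝ) < (N:ℝ) - p := by
      have : p < N := by omega
      have : (p:ℝ) < N := by exact_mod_cast this
      linarith
    have hS2 : S2 p X β ε N ω ≤ ((N:ℝ) - p)⁻¹ * (C * N) := by
      unfold S2
      exact mul_le_mul_of_nonneg_left (hres.trans hsum) (inv_nonneg.mpr ht.le)
    have hc3 : (0:ℝ) ≤ ρ * b⁻¹ * p :=
      mul_nonneg (mul_nonneg hρ0.le (inv_nonneg.mpr hb.le)) (Nat.cast_nonneg p)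
    have hDN : D ≤ (N:ℝ) - p := by
      have h5 : (p + ⌈D⌉₊ + 1 : ℕ) ≤ N := by omega
      have h6 : ((p:ℝ) + (⌈D⌉₊:ℝ) + 1) ≤ (N:ℝ) := by exact_mod_cast h5
      have h7 := Nat.le_ceil D
      linarith
    show ρ * b⁻¹ * (p:ℝ) * S2 p X β ε (m + k * n) ω ≤ ((m + k * n : ℕ) : ℝ)
    calc ρ * b⁻¹ * (p:ℝ) * S2 p X β ε N ω
        ≤ ρ * b⁻¹ * (p:ℝ) * (((N:ℝ) - p)⁻¹ * (C * N)) :=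
          mul_le_mul_of_nonneg_left hS2 hc3
      _ = D * (N:ℝ) * ((N:ℝ) - p)⁻¹ := by rw [hD]; ring
      _ ≤ ((N:ℝ) - p) * (N:ℝ) * ((N:ℝ) - p)⁻¹ :=
          mul_le_mul_of_nonneg_right
            (mul_le_mul_of_nonneg_right hDN (Nat.cast_nonneg N))
            (inv_nonneg.mpr ht.le)
      _ = (N:ℝ) := by
          rw [mul_comm ((N:ℝ) - p) (N:ℝ), mul_assoc,
            mul_inv_cancel₀ ht.ne', mul_one]
  constructor
  · -- measure-one statement
    have h0 : μ {ω | ¬ {n : ℕ | stopRule p X β ε ρ b m k ω n}.Nonempty} = 0 :=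
      ae_iff.mp hae1
    refine le_antisymm prob_le_one ?_
    calc (1:ENNReal) = μ Set.univ := measure_univ.symm
      _ = μ ({ω | {n : ℕ | stopRule p X β ε ρ b m k ω n}.Nonempty} ∪
            {ω | {n : ℕ | stopRule p X β ε ρ b m k ω n}.Nonempty}ᶜ) := by
          rw [Set.union_compl_self]
      _ ≤ μ {ω | {n : ℕ | stopRule p X β ε ρ b m k ω n}.Nonempty} +
            μ ({ω | {n : ℕ | stopRule p X β ε ρ b m k ω n}.Nonempty}ᶜ) :=
          measure_union_le _ _
      _ = μ {ω | {n : ℕ | stopRule p X β ε ρ b m k ω n}.Nonempty} := by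
          rw [Set.compl_setOf, h0, add_zero]
  · -- Part 2
    have hUident : ∀ i, IdentDistrib (U i) (U 0) μ μ := fun i =>
      ⟨(hUmeas i).aemeasurable, (hUmeas 0).aemeasurable, by rw [hUlaw i, hUlaw 0]⟩
    have hUint : Integrable (U 0) μ := by
      have hk0 : (0:ℝ) < (k:ℝ) / 2 := by
        have : (0:ℝ) < (k:ℝ) := by linarith
        linarith
      have h := aux_integrable_id_gamma hk0 (by norm_num : (0:ℝ) < 1/2)
      rw [← hUlaw 0] at h
      exact (integrable_map_measure h.aestronglyMeasurable
        (hUmeas 0).aemeasurable).mp h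
    obtain ⟨C', hC', haeU⟩ := aux_sum_eventually_le U hUint
      (fun i j hij => hUindep.indepFun hij) hUident
    filter_upwards [haeU] with ω hω
    obtain ⟨N₁, hN₁⟩ := hω
    set c₀ := ρ * ((p:ℝ) * (σ2:ℝ) / b) with hc₀
    have hc₀0 : 0 ≤ c₀ :=
      mul_nonneg hρ0.le (div_nonneg (mul_nonneg (Nat.cast_nonneg p) σ2.coe_nonneg) hb.le)
    set n := max N₁ (max m₀ (p + ⌈c₀ * C'⌉₊ + 1)) with hn
    refine ⟨n, le_trans (le_max_left _ _) (le_max_right _ _), ?_⟩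
    have hSig := hN₁ n (le_max_left _ _)
    have hlarge : p + ⌈c₀ * C'⌉₊ + 1 ≤ n := le_trans (le_max_right _ _) (le_max_right _ _)
    have hpn : (p:ℝ) + c₀ * C' + 1 ≤ (n:ℝ) := by
      have h6 : ((p:ℝ) + (⌈c₀ * C'⌉₊:ℝ) + 1) ≤ (n:ℝ) := by exact_mod_cast hlarge
      have h7 := Nat.le_ceil (c₀ * C')
      linarith
    have hn0 : (0:ℝ) ≤ (n:ℝ) := Nat.cast_nonneg n
    have hcast : ((k * n : ℕ) : ℝ) = (k:ℝ) * (n:ℝ) := by push_cast; ring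
    rw [hcast]
    have hknn : (n:ℝ) ≤ (k:ℝ) * n := le_mul_of_one_le_left hn0 hkR
    have hnp0 : (0:ℝ) ≤ (n:ℝ) - p := by nlinarith [mul_nonneg hc₀0 hC'.le]
    calc c₀ * ∑ i ∈ Finset.range n, U i ω
        ≤ c₀ * (C' * n) := mul_le_mul_of_nonneg_left hSig hc₀0
      _ = (c₀ * C') * n := by ring
      _ ≤ ((n:ℝ) - p) * n := by
          refine mul_le_mul_of_nonneg_right ?_ hn0
          linarith
      _ ≤ ((n:ℝ) - p) * ((k:ℝ) * n) := mul_le_mul_of_nonneg_left hknn hnp0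
      _ ≤ ((k:ℝ) * n - p) * ((k:ℝ) * n) := by
          refine mul_le_mul_of_nonneg_right (by linarith) ?_
          positivity
      _ = ((k:ℝ) * n) * ((k:ℝ) * n - p) := mul_comm _ _


end SeqLearn
end
end

section
/- For the sequential learning procedure 𝒫(ρ,k), the final sample size diverges as the risk bound shrinks: N_{𝒫(ρ,k)}(b) ↑ ∞ with probability one as b ↓ 0. -/
open MeasureTheory ProbabilityTheory Filter Matrix NNReal

noncomputable section

namespace SeqLearn

variable {Ω : Type*} [MeasurableSpace Ω]

-- G invertible
lemma gram_isUnit {p N : ℕ} (X : ℕ → Fin p → ℝ)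
    (hrank : (designMat p X N).rank = p) :
    IsUnit ((designMat p X N)ᵀ * designMat p X N) := by
  set D := designMat p X N
  have h1 : (Dᵀ * D).rank = p := by rw [Matrix.rank_transpose_mul_self]; exact hrank
  rw [← Matrix.mulVec_surjective_iff_isUnit]
  have : LinearMap.range (Dᵀ * D).mulVecLin = ⊤ := by
    apply Submodule.eq_top_of_finrank_eq
    rw [← Matrix.rank]
    simp [h1]
  intro y
  have := this ▸ Submodule.mem_top (x := y) (R := ℝ)
  obtain ⟨x, hx⟩ := LinearMap.mem_range.mp this
  exact ⟨x, hx⟩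

-- residual formula and properties
lemma residual_key {p N : ℕ} (hp : 0 < p) (hpN : p < N)
    (X : ℕ → Fin p → ℝ) (β : Fin p → ℝ) (ε : ℕ → Ω → ℝ)
    (hrank : (designMat p X N).rank = p) :
    ∃ a : Fin N → ℝ, a ≠ 0 ∧ ∀ ω : Ω,
      (∑ i, (Yvec p X β ε N ω i - (designMat p X N *ᵥ lse p X β ε N ω) i) ^ 2
          ≤ ∑ i : Fin N, (ε i ω) ^ 2) ∧
      ((∑ i, (Yvec p X β ε N ω i - (designMat p X N *ᵥ lse p X β ε N ω) i) ^ 2) = 0 →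
        ∑ i : Fin N, a i * ε i ω = 0) := by
  set D := designMat p X N with hD
  set G := Dᵀ * D with hG
  have hGu : IsUnit G := gram_isUnit X hrank
  have hGdet : IsUnit G.det := (Matrix.isUnit_iff_isUnit_det G).mp hGu
  set H := D * G⁻¹ * Dᵀ with hH
  have hGsymm : Gᵀ = G := by rw [hG, Matrix.transpose_mul, Matrix.transpose_transpose]
  have hHsymm : Hᵀ = H := by
    rw [hH, Matrix.transpose_mul, Matrix.transpose_mul, Matrix.transpose_transpose,
      Matrix.transpose_nonsing_inv, hGsymm, Matrix.mul_assoc]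
  have hHidem : H * H = H := by
    rw [hH]
    calc D * G⁻¹ * Dᵀ * (D * G⁻¹ * Dᵀ)
        = D * ((G⁻¹ * G) * (G⁻¹ * Dᵀ)) := by
          simp only [Matrix.mul_assoc, hG]
      _ = D * G⁻¹ * Dᵀ := by rw [Matrix.nonsing_inv_mul G hGdet, Matrix.one_mul, ← Matrix.mul_assoc]
  -- kernel vector
  have hnotinj : ¬ Function.Injective (Dᵀ.mulVecLin) := by
    intro hinj
    have := LinearMap.finrank_le_finrank_of_injective hinj
    simp only [Module.finrank_pi, Fintype.card_fin] at this
    omega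
  obtain ⟨x, y, hxy, hne⟩ := Function.not_injective_iff.mp hnotinj
  refine ⟨x - y, sub_ne_zero_of_ne hne, fun ω => ?_⟩
  have ha : (x - y) ᵥ* D = 0 := by
    have := sub_eq_zero_of_eq hxy
    rw [← map_sub] at this
    rw [Matrix.sub_vecMul]
    simpa [Matrix.mulVecLin_apply] using this
  set e : Fin N → ℝ := fun i => ε (i : ℕ) ω with he
  have hY : Yvec p X β ε N ω = D *ᵥ β + e := by
    funext i
    simp [Yvec, Matrix.mulVec, dotProduct, hD, designMat, he]
  have e1 : Dᵀ *ᵥ (D *ᵥ β + e) = G *ᵥ β + Dᵀ *ᵥ e := by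
    rw [Matrix.mulVec_add, Matrix.mulVec_mulVec, ← hG]
  have e2 : G⁻¹ *ᵥ (G *ᵥ β + Dᵀ *ᵥ e) = β + G⁻¹ *ᵥ (Dᵀ *ᵥ e) := by
    rw [Matrix.mulVec_add, Matrix.mulVec_mulVec, Matrix.nonsing_inv_mul G hGdet,
      Matrix.one_mulVec]
  have hlse : D *ᵥ lse p X β ε N ω = D *ᵥ β + H *ᵥ e := by
    rw [lse, hY, ← hD, ← hG, e1, e2, Matrix.mulVec_add, Matrix.mulVec_mulVec,
      Matrix.mulVec_mulVec, ← hH]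
  have hr : (fun i => Yvec p X β ε N ω i - (D *ᵥ lse p X β ε N ω) i) = e - H *ᵥ e := by
    funext i
    rw [hY, hlse]
    simp
  have hvm : (H *ᵥ e) ᵥ* H = H *ᵥ e := by
    nth_rewrite 2 [← hHsymm]
    rw [Matrix.vecMul_transpose, Matrix.mulVec_mulVec, hHidem]
  have h1 : (H *ᵥ e) ⬝ᵥ (H *ᵥ e) = e ⬝ᵥ (H *ᵥ e) := by
    conv_lhs => rw [Matrix.dotProduct_mulVec, hvm]
    exact dotProduct_comm _ _
  have hsum : ∑ i, (Yvec p X β ε N ω i - (D *ᵥ lse p X β ε N ω) i) ^ 2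
      = ∑ i : Fin N, (ε (i : ℕ) ω) ^ 2 - ∑ i, ((H *ᵥ e) i) ^ 2 := by
    have hdp : ∀ (v : Fin N → ℝ), v ⬝ᵥ v = ∑ i, v i ^ 2 := by
      intro v; simp [dotProduct, pow_two]
    have : ∑ i, (Yvec p X β ε N ω i - (D *ᵥ lse p X β ε N ω) i) ^ 2
        = (e - H *ᵥ e) ⬝ᵥ (e - H *ᵥ e) := by
      rw [hdp]
      exact congrArg (fun f => ∑ i, f i ^ 2) hr
    rw [this, sub_dotProduct, dotProduct_sub, dotProduct_sub, h1, ← hdp, ← hdp]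
    have h2 : (H *ᵥ e) ⬝ᵥ e = e ⬝ᵥ (H *ᵥ e) := dotProduct_comm _ _
    rw [h2, h1, ← he]; ring
  constructor
  · rw [hsum]
    have : (0:ℝ) ≤ ∑ i, ((H *ᵥ e) i) ^ 2 := Finset.sum_nonneg fun i _ => sq_nonneg _
    linarith
  · intro h0
    have hz : (fun i => Yvec p X β ε N ω i - (D *ᵥ lse p X β ε N ω) i) = 0 := by
      funext i
      have := (Finset.sum_eq_zero_iff_of_nonneg (fun i _ => sq_nonneg _)).mp h0 i (Finset.mem_univ i)
      exact pow_eq_zero_iff (n := 2) (by norm_num) |>.mp this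
    have heH : e = H *ᵥ e := by
      rw [hr] at hz
      exact sub_eq_zero.mp hz
    have hdp0 : (x - y) ⬝ᵥ e = 0 := by
      calc (x - y) ⬝ᵥ e = (x - y) ⬝ᵥ (H *ᵥ e) := by rw [← heH]
        _ = ((x - y) ᵥ* H) ⬝ᵥ e := Matrix.dotProduct_mulVec _ _ _
        _ = 0 := by
            rw [hH, Matrix.mul_assoc, ← Matrix.vecMul_vecMul, ha, Matrix.zero_vecMul,
              zero_dotProduct]
    simpa [dotProduct, he] using hdp0




lemma gaussian_singleton {c : ℝ} {v : ℝ≥0} (hv : v ≠ 0) (x : ℝ) :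
    gaussianReal c v {x} = 0 :=
  gaussianReal_absolutelyContinuous c hv (measure_singleton x)

lemma integrable_sq_gaussian {v : ℝ≥0} (hv : v ≠ 0) :
    Integrable (fun x : ℝ => x ^ 2) (gaussianReal 0 v) := by
  rw [gaussianReal_of_var_ne_zero _ hv]
  have hb : (0:ℝ) < (2 * (v:ℝ))⁻¹ := by
    have : (0:ℝ) < (v:ℝ) := by positivity -- careful: need v ≠ 0
    positivity
  rw [gaussianPDF_def]
  rw [integrable_withDensity_iff (measurable_gaussianPDFReal 0 v).ennreal_ofReal
    (ae_of_all _ fun x => ENNReal.ofReal_lt_top)]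
  have key : Integrable (fun x : ℝ => x ^ (2:ℝ) * Real.exp (-(2 * (v:ℝ))⁻¹ * x ^ 2)) :=
    integrable_rpow_mul_exp_neg_mul_sq hb (by norm_num)
  have heq : (fun x : ℝ => x ^ 2 * (ENNReal.ofReal (gaussianPDFReal 0 v x)).toReal)
      = fun x : ℝ => (Real.sqrt (2 * Real.pi * v))⁻¹ *
          (x ^ (2:ℝ) * Real.exp (-(2 * (v:ℝ))⁻¹ * x ^ 2)) := by
    funext x
    rw [ENNReal.toReal_ofReal (gaussianPDFReal_nonneg _ _ _), gaussianPDFReal,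
      Real.rpow_two]
    rw [show -(2 * (v:ℝ))⁻¹ * x ^ 2 = -(x - 0) ^ 2 / (2 * (v:ℝ)) by ring]
    ring
  rw [heq]
  exact key.const_mul _

lemma indep_add_eq_zero {μ : Measure Ω} [IsProbabilityMeasure μ] {f g : Ω → ℝ}
    (hf : Measurable f) (hg : Measurable g) (hfg : IndepFun f g μ)
    {v : ℝ≥0} (hv : v ≠ 0) (hmap : μ.map f = gaussianReal 0 v) :
    μ {ω | f ω + g ω = 0} = 0 := by
  have hs : MeasurableSet {q : ℝ × ℝ | q.1 + q.2 = 0} :=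
    (measurable_fst.add measurable_snd) (measurableSet_singleton 0)
  have hpair : Measurable (fun ω => (f ω, g ω)) := hf.prodMk hg
  have h1 : μ {ω | f ω + g ω = 0}
      = (μ.map (fun ω => (f ω, g ω))) {q : ℝ × ℝ | q.1 + q.2 = 0} := by
    rw [Measure.map_apply hpair hs]
    rfl
  rw [h1, (indepFun_iff_map_prod_eq_prod_map_map hf.aemeasurable hg.aemeasurable).mp hfg]
  rw [Measure.prod_apply_symm hs]
  have : ∀ y : ℝ, (μ.map f) ((fun x => (x, y)) ⁻¹' {q : ℝ × ℝ | q.1 + q.2 = 0}) = 0 := by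
    intro y
    have : ((fun x => (x, y)) ⁻¹' {q : ℝ × ℝ | q.1 + q.2 = 0}) = {-y} := by
      ext x; simp [eq_neg_iff_add_eq_zero]
    rw [this, hmap]
    exact gaussian_singleton hv _
  simp only [this]
  simp

lemma linear_comb_null {μ : Measure Ω} [IsProbabilityMeasure μ] {ε : ℕ → Ω → ℝ}
    (hmeas : ∀ i, Measurable (ε i))
    (hindep : iIndepFun ε μ)
    {σ2 : ℝ≥0} (hσ2 : σ2 ≠ 0) (hmap : ∀ i, μ.map (ε i) = gaussianReal 0 σ2)
    (N : ℕ) (a : Fin N → ℝ) (ha : a ≠ 0) :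
    μ {ω | ∑ i : Fin N, a i * ε (i : ℕ) ω = 0} = 0 := by
  obtain ⟨i₀, ha0⟩ := Function.ne_iff.mp ha
  simp only [Pi.zero_apply] at ha0
  set a' : ℕ → ℝ := fun j => if h : j < N then a ⟨j, h⟩ else 0 with ha'
  set c : ℕ → ℝ := fun j => if j = (i₀ : ℕ) then 1 else (a i₀)⁻¹ * a' j with hc
  set Z : ℕ → Ω → ℝ := fun j ω => c j * ε j ω with hZ
  have hZmeas : ∀ j, Measurable (Z j) := fun j => (hmeas j).const_mul (c j)
  have hZindep : iIndepFun Z μ :=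
    hindep.comp (fun j x => c j * x) (fun j => measurable_id.const_mul (c j))
  set s : Finset ℕ := (Finset.range N).erase (i₀ : ℕ) with hs
  have hind : IndepFun (∑ j ∈ s, Z j) (Z (i₀ : ℕ)) μ :=
    hZindep.indepFun_finsetSum_of_notMem hZmeas (Finset.notMem_erase _ _)
  set g : Ω → ℝ := fun ω => ∑ j ∈ s, Z j ω with hg
  have hsumfun : (∑ j ∈ s, Z j) = g := by
    funext ω; rw [hg]; exact Finset.sum_apply ω s Z
  have hZi0 : Z (i₀ : ℕ) = ε (i₀ : ℕ) := by
    funext ω; simp [hZ, hc]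
  have hind' : IndepFun (ε (i₀ : ℕ)) g μ := by
    have := hind.symm
    rwa [hsumfun, hZi0] at this
  have hgmeas : Measurable g := Finset.measurable_sum s fun j _ => hZmeas j
  have hseteq : {ω | ∑ i : Fin N, a i * ε (i : ℕ) ω = 0}
      = {ω | ε (i₀ : ℕ) ω + g ω = 0} := by
    ext ω
    simp only [Set.mem_setOf_eq]
    have key : ∑ i : Fin N, a i * ε (i : ℕ) ω = a i₀ * (ε (i₀ : ℕ) ω + g ω) := by
      have st1 : ∑ i : Fin N, a i * ε (i : ℕ) ω
          = ∑ j ∈ Finset.range N, a' j * ε j ω := by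
        rw [← Fin.sum_univ_eq_sum_range (fun j => a' j * ε j ω) N]
        refine Finset.sum_congr rfl fun i _ => ?_
        simp [ha']
      have st2 : ∑ j ∈ Finset.range N, a' j * ε j ω
          = a' (i₀ : ℕ) * ε (i₀ : ℕ) ω + ∑ j ∈ s, a' j * ε j ω := by
        rw [hs]
        exact (Finset.add_sum_erase _ _ (Finset.mem_range.mpr i₀.isLt)).symm
      have st3 : ∑ j ∈ s, a' j * ε j ω = a i₀ * g ω := by
        rw [hg, Finset.mul_sum]
        refine Finset.sum_congr rfl fun j hj => ?_
        have hjne : j ≠ (i₀ : ℕ) := Finset.ne_of_mem_erase hj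
        rw [hZ]
        simp only [hc, if_neg hjne]
        field_simp
      have ha'i0 : a' (i₀ : ℕ) = a i₀ := by simp [ha']
      rw [st1, st2, st3, ha'i0]
      ring
    rw [key]
    constructor
    · intro h
      rcases mul_eq_zero.mp h with h' | h'
      · exact absurd h' ha0
      · exact h'
    · intro h; rw [h, mul_zero]
  rw [hseteq]
  exact indep_add_eq_zero (hmeas _) hgmeas hind' hσ2 (hmap _)

lemma slln_sq {μ : Measure Ω} [IsProbabilityMeasure μ] {ε : ℕ → Ω → ℝ}
    (hmeas : ∀ i, Measurable (ε i))
    (hindep : iIndepFun ε μ)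
    {σ2 : ℝ≥0} (hσ2 : σ2 ≠ 0) (hmap : ∀ i, μ.map (ε i) = gaussianReal 0 σ2) :
    ∀ᵐ ω ∂μ, ∃ C : ℝ, 0 < C ∧ ∃ N₀ : ℕ,
      ∀ N, N₀ ≤ N → ∑ i ∈ Finset.range N, (ε i ω) ^ 2 ≤ C * N := by
  set Xs : ℕ → Ω → ℝ := fun i ω => (ε i ω) ^ 2 with hXs
  have hsq : Measurable (fun x : ℝ => x ^ 2) := measurable_id.pow_const 2
  have hint : Integrable (Xs 0) μ := by
    have h1 : Integrable (fun x : ℝ => x ^ 2) (μ.map (ε 0)) := by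
      rw [hmap 0]; exact integrable_sq_gaussian hσ2
    exact (integrable_map_measure hsq.aestronglyMeasurable (hmeas 0).aemeasurable).mp h1
  have hpind : Pairwise (Function.onFun (IndepFun · · μ) Xs) := by
    intro i j hij
    exact IndepFun.comp (hindep.indepFun hij) hsq hsq
  have hident : ∀ i, IdentDistrib (Xs i) (Xs 0) μ μ := by
    intro i
    have : IdentDistrib (ε i) (ε 0) μ μ :=
      ⟨(hmeas i).aemeasurable, (hmeas 0).aemeasurable, by rw [hmap i, hmap 0]⟩
    exact this.comp hsq
  filter_upwards [strong_law_ae_real Xs hint hpind hident] with ω hω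
  set E := μ[Xs 0] with hE
  have hev : ∀ᶠ n : ℕ in atTop, (∑ i ∈ Finset.range n, Xs i ω) / n ≤ E + 1 :=
    hω.eventually (eventually_le_nhds (by linarith))
  obtain ⟨N₀, hN₀⟩ := eventually_atTop.mp hev
  refine ⟨max (E + 1) 1, lt_of_lt_of_le one_pos (le_max_right _ _), max N₀ 1, fun N hN => ?_⟩
  have hN1 : (1:ℕ) ≤ N := le_trans (le_max_right _ _) hN
  have hNpos : (0:ℝ) < N := by exact_mod_cast hN1
  have h2 : (∑ i ∈ Finset.range N, Xs i ω) / N ≤ E + 1 :=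
    hN₀ N (le_trans (le_max_left _ _) hN)
  calc ∑ i ∈ Finset.range N, (ε i ω) ^ 2 = (∑ i ∈ Finset.range N, Xs i ω) := rfl
    _ ≤ (E + 1) * N := by rwa [div_le_iff₀ hNpos] at h2
    _ ≤ max (E + 1) 1 * N := by
        apply mul_le_mul_of_nonneg_right (le_max_left _ _) hNpos.le


/-- For the sequential learning procedure `𝒫(ρ,k)`, the final
sample size diverges as the risk bound shrinks: `N_{𝒫(ρ,k)}(b) ↑ ∞` with
probability one as `b ↓ 0` (monotone nonincreasing in `b`, and tending to
infinity as `b → 0⁺`). -/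
theorem final_sample_size_tendsto_atTop (μ : Measure Ω) [IsProbabilityMeasure μ]
    (p : ℕ) (hp : 1 ≤ p) (σ2 : ℝ≥0) (hσ2 : 0 < σ2)
    (X : ℕ → Fin p → ℝ) (β : Fin p → ℝ) (ε : ℕ → Ω → ℝ)
    (herr : GaussErrors μ σ2 ε)
    (ρ : ℝ) (hρ : 0 < ρ ∧ ρ ≤ 1) (k : ℕ) (hk : 1 ≤ k)
    (m₀ : ℕ) (hm₀ : 1 ≤ m₀) (m : ℕ) (hm : m = m₀ * k + p)
    (hrank : ∀ j, p + 1 ≤ j → (designMat p X j).rank = p) :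
    ∀ᵐ ω ∂μ,
      (∀ b₁ b₂ : ℝ, 0 < b₁ → b₁ ≤ b₂ →
          Nfin p X β ε ρ b₂ m k ω ≤ Nfin p X β ε ρ b₁ m k ω) ∧
      Tendsto (fun b : ℝ => Nfin p X β ε ρ b m k ω) (nhdsWithin 0 (Set.Ioi 0))
        atTop := by
  obtain ⟨hρ0, hρ1⟩ := hρ
  obtain ⟨hmeas, hindep, hmap⟩ := herr
  have hσ2' : σ2 ≠ 0 := hσ2.ne'
  have hp0 : 0 < p := hp
  have hNge : ∀ n : ℕ, p + 1 ≤ m + k * n := by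
    intro n
    have : 1 * 1 ≤ m₀ * k := Nat.mul_le_mul hm₀ hk
    omega
  have hplt : ∀ n : ℕ, p < m + k * n := fun n => by have := hNge n; omega
  -- a.s. positivity of S2
  have hA : ∀ᵐ ω ∂μ, ∀ n : ℕ, 0 < S2 p X β ε (m + k * n) ω := by
    rw [ae_all_iff]
    intro n
    obtain ⟨a, ha, hkey⟩ := residual_key hp0 (hplt n) X β ε (hrank _ (hNge n))
    have hsub : {ω | ¬ 0 < S2 p X β ε (m + k * n) ω}
        ⊆ {ω | ∑ i : Fin (m + k * n), a i * ε (i : ℕ) ω = 0} := by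
      intro ω hω
      simp only [Set.mem_setOf_eq] at hω ⊢
      have hq : (0:ℝ) ≤ ∑ i, (Yvec p X β ε (m + k * n) ω i -
          (designMat p X (m + k * n) *ᵥ lse p X β ε (m + k * n) ω) i) ^ 2 :=
        Finset.sum_nonneg fun i _ => sq_nonneg _
      have hNp : (0:ℝ) < ((m + k * n : ℕ) : ℝ) - (p : ℝ) := by
        have h' : (p:ℝ) < ((m + k * n : ℕ) : ℝ) := by exact_mod_cast hplt n
        linarith
      refine (hkey ω).2 ?_
      by_contra hq0
      have hqpos : (0:ℝ) < ∑ i, (Yvec p X β ε (m + k * n) ω i -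
          (designMat p X (m + k * n) *ᵥ lse p X β ε (m + k * n) ω) i) ^ 2 :=
        lt_of_le_of_ne hq (Ne.symm hq0)
      exact hω (mul_pos (inv_pos.mpr hNp) hqpos)
    have hnull := linear_comb_null hmeas hindep hσ2' hmap (m + k * n) a ha
    have : μ {ω | ¬ 0 < S2 p X β ε (m + k * n) ω} = 0 :=
      measure_mono_null hsub hnull
    rw [ae_iff]
    exact this
  -- deterministic upper bound for S2
  have hS2up : ∀ (n : ℕ) (ω : Ω), S2 p X β ε (m + k * n) ω
      ≤ (((m + k * n : ℕ) : ℝ) - (p : ℝ))⁻¹ *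
        ∑ i ∈ Finset.range (m + k * n), (ε i ω) ^ 2 := by
    intro n ω
    obtain ⟨a, ha, hkey⟩ := residual_key hp0 (hplt n) X β ε (hrank _ (hNge n))
    have h1 := (hkey ω).1
    have h2 : ∑ i : Fin (m + k * n), (ε (i : ℕ) ω) ^ 2
        = ∑ i ∈ Finset.range (m + k * n), (ε i ω) ^ 2 :=
      Fin.sum_univ_eq_sum_range (fun i => (ε i ω) ^ 2) (m + k * n)
    rw [S2]
    rw [← h2]
    have hinv : (0:ℝ) ≤ (((m + k * n : ℕ) : ℝ) - (p : ℝ))⁻¹ := by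
      apply inv_nonneg.mpr
      have := hplt n
      have : (p : ℝ) ≤ ((m + k * n : ℕ) : ℝ) := by exact_mod_cast this.le
      linarith
    exact mul_le_mul_of_nonneg_left h1 hinv
  filter_upwards [hA, slln_sq hmeas hindep hσ2' hmap] with ω hAω hBω
  obtain ⟨C, hC, N₀, hCN⟩ := hBω
  -- nonemptiness of the stopping sets
  have hne : ∀ b : ℝ, 0 < b → {n : ℕ | stopRule p X β ε ρ b m k ω n}.Nonempty := by
    intro b hb
    set n₁ : ℕ := max (max N₀ (2 * p)) ⌈ρ * b⁻¹ * p * (2 * C)⌉₊ with hn₁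
    refine ⟨n₁, ?_⟩
    set N : ℕ := m + k * n₁ with hN
    have hn₁N : n₁ ≤ N := by
      have : n₁ ≤ k * n₁ := Nat.le_mul_of_pos_left n₁ hk
      omega
    have hNpos : (0:ℝ) < ((N : ℕ) : ℝ) - (p : ℝ) := by
      have h' : (p:ℝ) < ((N : ℕ) : ℝ) := by exact_mod_cast hplt n₁
      linarith
    have hS2b : S2 p X β ε N ω ≤ 2 * C := by
      have hup := hS2up n₁ ω
      have hsum : ∑ i ∈ Finset.range N, (ε i ω) ^ 2 ≤ C * N := by
        apply hCN
        calc N₀ ≤ n₁ := le_trans (le_max_left _ _) (le_max_left _ _)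
          _ ≤ N := hn₁N
      have h2pN : (N : ℝ) ≤ 2 * ((N : ℝ) - p) := by
        have h2p : 2 * p ≤ N :=
          le_trans (le_trans (le_max_right _ _) (le_max_left _ _)) hn₁N
        have : ((2 * p : ℕ) : ℝ) ≤ (N : ℝ) := by exact_mod_cast h2p
        push_cast at this
        linarith
      calc S2 p X β ε N ω
          ≤ ((N : ℝ) - p)⁻¹ * ∑ i ∈ Finset.range N, (ε i ω) ^ 2 := hup
        _ ≤ ((N : ℝ) - p)⁻¹ * (C * N) := by
            exact mul_le_mul_of_nonneg_left hsum (inv_nonneg.mpr hNpos.le)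
        _ ≤ ((N : ℝ) - p)⁻¹ * (C * (2 * ((N : ℝ) - p))) := by
            refine mul_le_mul_of_nonneg_left ?_ (inv_nonneg.mpr hNpos.le)
            exact mul_le_mul_of_nonneg_left h2pN hC.le
        _ = 2 * C := by field_simp
    show ρ * b⁻¹ * (p : ℝ) * S2 p X β ε (m + k * n₁) ω ≤ ((m + k * n₁ : ℕ) : ℝ)
    have hcoef : (0:ℝ) ≤ ρ * b⁻¹ * p := by positivity
    calc ρ * b⁻¹ * (p : ℝ) * S2 p X β ε (m + k * n₁) ω
        ≤ ρ * b⁻¹ * p * (2 * C) := mul_le_mul_of_nonneg_left hS2b hcoef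
      _ ≤ (⌈ρ * b⁻¹ * p * (2 * C)⌉₊ : ℝ) := Nat.le_ceil _
      _ ≤ ((m + k * n₁ : ℕ) : ℝ) := by
          have h3 : ⌈ρ * b⁻¹ * p * (2 * C)⌉₊ ≤ m + k * n₁ :=
            le_trans (le_max_right _ _) hn₁N
          exact_mod_cast h3
  -- monotonicity of the stopping time
  have hTmono : ∀ b₁ b₂ : ℝ, 0 < b₁ → b₁ ≤ b₂ →
      Tstop p X β ε ρ b₂ m k ω ≤ Tstop p X β ε ρ b₁ m k ω := by
    intro b₁ b₂ hb₁ h12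
    have hb₂ : 0 < b₂ := lt_of_lt_of_le hb₁ h12
    have hsub : {n : ℕ | stopRule p X β ε ρ b₁ m k ω n}
        ⊆ {n : ℕ | stopRule p X β ε ρ b₂ m k ω n} := by
      intro n hn
      simp only [Set.mem_setOf_eq, stopRule] at hn ⊢
      have hinv : b₂⁻¹ ≤ b₁⁻¹ := by
        apply inv_anti₀ hb₁ h12
      have hS2nn : 0 ≤ S2 p X β ε (m + k * n) ω := (hAω n).le
      calc ρ * b₂⁻¹ * (p : ℝ) * S2 p X β ε (m + k * n) ω
          ≤ ρ * b₁⁻¹ * (p : ℝ) * S2 p X β ε (m + k * n) ω := by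
            apply mul_le_mul_of_nonneg_right _ hS2nn
            apply mul_le_mul_of_nonneg_right _ (Nat.cast_nonneg p)
            exact mul_le_mul_of_nonneg_left hinv hρ0.le
        _ ≤ _ := hn
    exact Nat.sInf_le (hsub (Nat.sInf_mem (hne b₁ hb₁)))
  constructor
  · -- monotonicity of Nfin
    intro b₁ b₂ hb₁ h12
    have hT := hTmono b₁ b₂ hb₁ h12
    apply Nat.ceil_le_ceil
    rw [Nstar, Nstar]
    have hTc : ((Tstop p X β ε ρ b₂ m k ω : ℕ) : ℝ)
        ≤ ((Tstop p X β ε ρ b₁ m k ω : ℕ) : ℝ) := by exact_mod_cast hT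
    have hρinv : (0:ℝ) ≤ ρ⁻¹ := by positivity
    apply mul_le_mul_of_nonneg_left _ hρinv
    have hk0 : (0:ℝ) ≤ (k : ℝ) := Nat.cast_nonneg k
    nlinarith
  · -- divergence
    rw [tendsto_atTop]
    intro M
    set F : ℕ → ℝ := fun n => ρ * p * S2 p X β ε (m + k * n) ω / ((m + k * n : ℕ) : ℝ)
      with hF
    have hFpos : ∀ n, 0 < F n := by
      intro n
      have h1 : (0:ℝ) < ((m + k * n : ℕ) : ℝ) := by
        have h0 : 0 < m + k * n := by have := hplt n; omega
        exact_mod_cast h0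
      have := hAω n
      rw [hF]
      positivity
    set δ : ℝ := (Finset.range (M + 1)).inf' ⟨M, Finset.self_mem_range_succ M⟩ F with hδ
    have hδpos : 0 < δ := by
      rw [hδ]
      exact (Finset.lt_inf'_iff _).2 fun n _ => hFpos n
    have key : ∀ b : ℝ, 0 < b → b < δ → M ≤ Nfin p X β ε ρ b m k ω := by
      intro b hb hbδ
      have hTb : M ≤ Tstop p X β ε ρ b m k ω := by
        by_contra hcon
        push_neg at hcon
        set T := Tstop p X β ε ρ b m k ω with hT
        have hmem : stopRule p X β ε ρ b m k ω T :=
          Nat.sInf_mem (hne b hb)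
        rw [stopRule] at hmem
        set N : ℕ := m + k * T with hN
        have hNpos : (0:ℝ) < ((N : ℕ) : ℝ) := by
          have := hplt T
          have h0 : 0 < N := by omega
          exact_mod_cast h0
        have hδle : δ ≤ F T := by
          rw [hδ]
          apply Finset.inf'_le
          exact Finset.mem_range.mpr (by omega)
        have hbF : b < F T := lt_of_lt_of_le hbδ hδle
        rw [hF] at hbF
        have h1 : b * ((N : ℕ) : ℝ) < ρ * p * S2 p X β ε N ω := by
          rw [lt_div_iff₀ hNpos] at hbF
          exact hbF
        have h2 : ((N : ℕ) : ℝ) < ρ * b⁻¹ * p * S2 p X β ε N ω := by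
          have h3 : ((N : ℕ) : ℝ) < ρ * p * S2 p X β ε N ω / b := by
            rw [lt_div_iff₀ hb]
            linarith [h1]
          calc ((N : ℕ) : ℝ) < ρ * p * S2 p X β ε N ω / b := h3
            _ = ρ * b⁻¹ * p * S2 p X β ε N ω := by ring
        linarith [hmem]
      -- conclude M ≤ Nfin
      set T := Tstop p X β ε ρ b m k ω with hT
      have h4 : (M : ℝ) ≤ Nstar p X β ε ρ b m k ω := by
        rw [Nstar]
        have hρinv : (1:ℝ) ≤ ρ⁻¹ := (one_le_inv₀ hρ0).mpr hρ1
        have h5 : (M : ℝ) ≤ (m : ℝ) + (k : ℝ) * (T : ℝ) := by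
          have h6 : M ≤ m + k * T := by
            have : T ≤ k * T := Nat.le_mul_of_pos_left T hk
            omega
          exact_mod_cast h6
        have h7 : (0:ℝ) ≤ (m : ℝ) + (k : ℝ) * (T : ℝ) := by positivity
        nlinarith
      calc M = ⌈(M : ℝ)⌉₊ := (Nat.ceil_natCast M).symm
        _ ≤ Nfin p X β ε ρ b m k ω := Nat.ceil_le_ceil h4
    have hmem : Set.Ioo (0:ℝ) δ ∈ nhdsWithin (0:ℝ) (Set.Ioi 0) :=
      Ioo_mem_nhdsGT_of_mem ⟨le_refl 0, hδpos⟩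
    filter_upwards [hmem] with b hb
    exact key b hb.1 hb.2


end SeqLearn
end
end
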